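/- In characteristic 2, the point P_O = [0:0:0:1] is a singular point of the quartic Kummer surface q(k̄₁,k̄₂,k̄₃,k̄₄) = 0 in ℙ³: all four partial derivatives of q vanish at [0:0:0:1]. -/
import Mathlib


open MvPolynomial

set_option maxHeartbeats 1000000

/-- The quartic polynomial defining the Kummer surface in `ℙ³` in characteristic
two (paper Appendix, Subsection 7.4), in variables `k̄₁ = X 0`, `k̄₂ = X 1`,
`k̄₃ = X 2`, `k̄₄ = X 3`. -/
-- raise heartbeats for the large polynomial definition
noncomputable def kummerQuartic {F : Type*} [CommRing F]
    (f₀ f₁ f₂ f₃ f₄ f₅ f₆ g₀ g₁ g₂ g₃ : F) : MvPolynomial (Fin 4) F :=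
  C (f₁^2 + f₂*g₀^2 + f₁*g₀*g₁ + f₀*g₁^2) * X 0 ^ 4
  + C (f₃*g₀^2 + f₁*g₀*g₂) * X 0 ^ 3 * X 1
  + C (f₄*g₀^2 + f₀*g₂^2 + f₁*g₀*g₃) * X 0 ^ 2 * X 1 ^ 2
  + C (f₅*g₀^2) * X 0 * X 1 ^ 3
  + C (f₆*g₀^2 + f₀*g₃^2) * X 1 ^ 4
  + C (f₃*g₀*g₁ + f₁*g₁*g₂ + f₁*g₀*g₃) * X 0 ^ 3 * X 2
  + C (f₅*g₀^2 + f₃*g₀*g₂) * X 0 ^ 2 * X 1 * X 2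
  + C (f₁*g₂^2 + f₁*g₁*g₃) * X 0 ^ 2 * X 1 * X 2
  + C (f₃*g₀*g₃) * X 0 * X 1 ^ 2 * X 2
  + C (f₁*g₃^2) * X 1 ^ 3 * X 2
  + C (f₃^2 + f₆*g₀^2 + f₅*g₀*g₁ + f₄*g₁^2) * X 0 ^ 2 * X 2 ^ 2
  + C (f₃*g₁*g₂ + f₂*g₂^2 + f₃*g₀*g₃ + f₁*g₂*g₃ + f₀*g₃^2) * X 0 ^ 2 * X 2 ^ 2
  + C (f₅*g₁^2 + f₅*g₀*g₂ + f₃*g₁*g₃ + f₁*g₃^2) * X 0 * X 1 * X 2 ^ 2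
  + C (f₆*g₁^2 + f₅*g₀*g₃ + f₂*g₃^2) * X 1 ^ 2 * X 2 ^ 2
  + C (f₅*g₁*g₂ + f₅*g₀*g₃ + f₃*g₂*g₃) * X 0 * X 2 ^ 3
  + C (f₅*g₁*g₃ + f₃*g₃^2) * X 1 * X 2 ^ 3
  + C (f₅^2 + f₆*g₂^2 + f₅*g₂*g₃ + f₄*g₃^2) * X 2 ^ 4
  + C (g₀^2) * X 0 ^ 3 * X 3
  + C (g₀*g₁) * X 0 ^ 2 * X 1 * X 3
  + C (g₀*g₂) * X 0 * X 1 ^ 2 * X 3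
  + C (g₀*g₃) * X 1 ^ 3 * X 3
  + C (g₁^2) * X 0 ^ 2 * X 2 * X 3
  + C (g₁*g₂ + g₀*g₃) * X 0 * X 1 * X 2 * X 3
  + C (g₁*g₃) * X 1 ^ 2 * X 2 * X 3
  + C (g₂^2) * X 0 * X 2 ^ 2 * X 3
  + C (g₂*g₃) * X 1 * X 2 ^ 2 * X 3
  + C (g₃^2) * X 2 ^ 3 * X 3
  + X 1 ^ 2 * X 3 ^ 2

/-- in characteristic 2, the point `P_O = [0:0:0:1]` is a singular
point of the quartic Kummer surface `q = 0` in `ℙ³`: all four partial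
derivatives of `q` vanish at `(0,0,0,1)`. -/
theorem origin_singular_on_kummerQuartic
    {F : Type*} [Field F] [CharP F 2]
    (f₀ f₁ f₂ f₃ f₄ f₅ f₆ g₀ g₁ g₂ g₃ : F) :
    ∀ i : Fin 4,
      eval (fun j : Fin 4 => if j = 3 then (1 : F) else 0)
        (pderiv i (kummerQuartic f₀ f₁ f₂ f₃ f₄ f₅ f₆ g₀ g₁ g₂ g₃)) = 0 := by
  intro i
  fin_cases i <;>
    simp [kummerQuartic, pderiv_X, Pi.single_apply, mul_comm]
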